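/- Let a = Σₖ λₖeₖ ∈ M(n,Λ,R), let p := supp a = e₁ + ⋯ + eₙ, and define Φ_a : Z → Z by Φ_a(x) := {pxa} − {xpa}. Then Φ_a maps Z_{1/2}(p) into itself; explicitly, Φ_a(u) = −(1/2) Σₖ λₖ(eₖu + ueₖ) for every u ∈ Z_{1/2}(p), and the restriction of Φ_a to the closed subspace Z_{1/2}(p) is a surjective complex-linear homeomorphism of Z_{1/2}(p) (a bounded complex-linear bijection with bounded inverse). -/

import Mathlib

/-! Setting: `H` is a complex Hilbert space, `Z = 𝔏(H)` the C*-algebra of bounded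
linear operators on `H`, regarded as a JB*-triple with product
`{a b c} = (a b* c + c b* a)/2`. -/

variable {H : Type*} [NormedAddCommGroup H] [InnerProductSpace ℂ H] [CompleteSpace H]

/-- A family of pairwise orthogonal (selfadjoint idempotent) projections in `𝔏(H)`. -/
def IsOrthProjFamily {n : ℕ} (e : Fin n → H →L[ℂ] H) : Prop :=
  (∀ k, star (e k) = e k) ∧ (∀ k, e k * e k = e k) ∧ ∀ j k, j ≠ k → e j * e k = 0

/-- Membership in the set `M(n,Λ,R)`: `a = ∑ₖ Λ k • e k` for some family of nonzero
pairwise orthogonal projections `e k` of finite rank `R k`. -/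
def MemberM (n : ℕ) (Λ : Fin n → ℂ) (R : Fin n → ℕ) (a : H →L[ℂ] H) : Prop :=
  ∃ e : Fin n → H →L[ℂ] H, IsOrthProjFamily e ∧
    (∀ k, FiniteDimensional ℂ (LinearMap.range ((e k) : H →ₗ[ℂ] H)) ∧
      Module.finrank ℂ (LinearMap.range ((e k) : H →ₗ[ℂ] H)) = R k) ∧
    a = ∑ k, Λ k • e k

/-- The JB*-triple product of `𝔏(H)`: `{x y z} = (x y* z + z y* x)/2`. -/
noncomputable def tp (x y z : H →L[ℂ] H) : H →L[ℂ] H :=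
  (1/2 : ℂ) • (x * star y * z + z * star y * x)

/-- The Peirce 1/2-space `Z_{1/2}(p) = {z : pz + zp = z}` of a projection `p`,
as a (closed) complex subspace of `𝔏(H)`. -/
def peirceHalf (p : H →L[ℂ] H) : Submodule ℂ (H →L[ℂ] H) where
  carrier := {z | p * z + z * p = z}
  add_mem' := by
    intro a b ha hb
    simp only [Set.mem_setOf_eq] at ha hb ⊢
    have h : p * (a + b) + (a + b) * p = (p * a + a * p) + (p * b + b * p) := by
      noncomm_ring
    rw [h, ha, hb]
  zero_mem' := by simp
  smul_mem' := by
    intro c a ha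
    simp only [Set.mem_setOf_eq] at ha ⊢
    rw [mul_smul_comm, smul_mul_assoc, ← smul_add, ha]


private lemma mem_peirceHalf_of {p x : H →L[ℂ] H} (h : p * x + x * p = x) :
    x ∈ peirceHalf p := h

private lemma eq_of_mem_peirceHalf {p x : H →L[ℂ] H} (h : x ∈ peirceHalf p) :
    p * x + x * p = x := h

/-- The continuous linear map `x ↦ b * x * c` on `𝔏(H)`. -/
noncomputable def lrMul (b c : H →L[ℂ] H) : (H →L[ℂ] H) →L[ℂ] (H →L[ℂ] H) :=
  ((ContinuousLinearMap.mul ℂ (H →L[ℂ] H)).flip c).comp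
    (ContinuousLinearMap.mul ℂ (H →L[ℂ] H) b)

@[simp] lemma lrMul_apply (b c x : H →L[ℂ] H) : lrMul b c x = b * x * c := rfl

set_option maxHeartbeats 1600000 in
/-- For `a = ∑ Λ k • e k ∈ M(n,Λ,R)` with support `p = ∑ e k`, the map
`Φ_a(x) = {pxa} − {xpa}` preserves `Z_{1/2}(p)`, is given there by
`Φ_a(u) = −(1/2) ∑ Λ k • (eₖu + ueₖ)`, and restricts to a surjective complex-linear
homeomorphism of `Z_{1/2}(p)`. -/
theorem Phi_is_linear_homeomorphism_of_peirceHalf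
    (n : ℕ) (hn : 1 ≤ n) (Λ : Fin n → ℂ) (R : Fin n → ℕ)
    (hΛ0 : ∀ k, Λ k ≠ 0) (hΛinj : Function.Injective Λ) (hR : ∀ k, 0 < R k)
    (e : Fin n → H →L[ℂ] H) (he : IsOrthProjFamily e)
    (herank : ∀ k, FiniteDimensional ℂ (LinearMap.range ((e k) : H →ₗ[ℂ] H)) ∧
      Module.finrank ℂ (LinearMap.range ((e k) : H →ₗ[ℂ] H)) = R k)
    (a p : H →L[ℂ] H) (ha : a = ∑ k, Λ k • e k) (hp : p = ∑ k, e k) :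
    (∀ u ∈ peirceHalf p, tp p u a - tp u p a
        = -((1/2 : ℂ) • ∑ k, Λ k • (e k * u + u * e k))) ∧
    (∀ u ∈ peirceHalf p, tp p u a - tp u p a ∈ peirceHalf p) ∧
    ∃ Ψ : peirceHalf p ≃L[ℂ] peirceHalf p,
      ∀ u : peirceHalf p,
        (Ψ u : H →L[ℂ] H) = tp p (u : H →L[ℂ] H) a - tp (u : H →L[ℂ] H) p a := by
  obtain ⟨hstar, hidem, horth⟩ := he
  have hep : ∀ k, e k * p = e k := fun k => by
    rw [hp, Finset.mul_sum, Finset.sum_eq_single k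
      (fun j _ hj => horth k j hj.symm) (fun h => absurd (Finset.mem_univ k) h), hidem]
  have hpe : ∀ k, p * e k = e k := fun k => by
    rw [hp, Finset.sum_mul, Finset.sum_eq_single k
      (fun j _ hj => horth j k hj) (fun h => absurd (Finset.mem_univ k) h), hidem]
  have hpp : p * p = p := by
    nth_rewrite 1 [hp]
    rw [Finset.sum_mul]
    simp only [hep]
    exact hp.symm
  have hap : a * p = a := by
    nth_rewrite 1 [ha]
    rw [Finset.sum_mul]
    simp only [smul_mul_assoc, hep]
    exact ha.symm
  have hpa : p * a = a := by
    nth_rewrite 1 [ha]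
    rw [Finset.mul_sum]
    simp only [mul_smul_comm, hpe]
    exact ha.symm
  have hsp : star p = p := by
    rw [hp]
    simp [hstar]
  have hea : ∀ k, e k * a = Λ k • e k := fun k => by
    rw [ha, Finset.mul_sum, Finset.sum_eq_single k
      (fun j _ hj => by rw [mul_smul_comm, horth k j hj.symm, smul_zero])
      (fun h => absurd (Finset.mem_univ k) h), mul_smul_comm, hidem]
  have hae : ∀ k, a * e k = Λ k • e k := fun k => by
    rw [ha, Finset.sum_mul, Finset.sum_eq_single k
      (fun j _ hj => by rw [smul_mul_assoc, horth j k hj, smul_zero])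
      (fun h => absurd (Finset.mem_univ k) h), smul_mul_assoc, hidem]
  have ha1p : a * (1 - p) = 0 := by rw [mul_sub, mul_one, hap, sub_self]
  have h1pa : (1 - p) * a = 0 := by rw [sub_mul, one_mul, hpa, sub_self]
  have hpup : ∀ u : H →L[ℂ] H, p * u + u * p = u → p * u * p = 0 := by
    intro u hu
    have h1 : p * (p * u + u * p) = p * u := by rw [hu]
    rw [mul_add, ← mul_assoc, hpp, ← mul_assoc] at h1
    exact (add_eq_left).mp h1
  have key : ∀ w : H →L[ℂ] H, p * w * p = 0 → p * w * a = 0 ∧ a * w * p = 0 := by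
    intro w hw
    constructor
    · have h2 : p * w * a = p * w * p * a := by
        conv_lhs => rw [← hpa]
        noncomm_ring
      rw [h2, hw, zero_mul]
    · have h2 : a * w * p = a * (p * w * p) := by
        conv_lhs => rw [← hap]
        noncomm_ring
      rw [h2, hw, mul_zero]
  have Phi_eq : ∀ u : H →L[ℂ] H, p * u + u * p = u →
      tp p u a - tp u p a = -((1/2 : ℂ) • (u * a + a * u)) := by
    intro u hu
    have hsu : p * star u + star u * p = star u := by
      have h0 := congrArg star hu
      rw [star_add, star_mul, star_mul, hsp] at h0
      rw [add_comm]
      exact h0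
    have k1 := key (star u) (hpup _ hsu)
    have h1 : tp p u a = 0 := by
      rw [tp, k1.1, k1.2, add_zero, smul_zero]
    have h2 : tp u p a = (1/2 : ℂ) • (u * a + a * u) := by
      rw [tp, hsp]
      congr 1
      rw [mul_assoc, hpa, hap]
    rw [h1, h2, zero_sub]
  have memhalf : ∀ u : H →L[ℂ] H, p * u + u * p = u →
      p * (u * a + a * u) + (u * a + a * u) * p = u * a + a * u := by
    intro u hu
    have k1 := key u (hpup u hu)
    have h2 : p * (u * a + a * u) + (u * a + a * u) * p
        = p * u * a + (p * a) * u + u * (a * p) + a * u * p := by noncomm_ring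
    rw [h2, k1.1, k1.2, hpa, hap]
    abel
  have part1 : ∀ u ∈ peirceHalf p, tp p u a - tp u p a
      = -((1/2 : ℂ) • ∑ k, Λ k • (e k * u + u * e k)) := by
    intro u hu
    rw [Phi_eq u (eq_of_mem_peirceHalf hu)]
    congr 2
    rw [ha, Finset.mul_sum, Finset.sum_mul]
    simp only [mul_smul_comm, smul_mul_assoc]
    rw [← Finset.sum_add_distrib]
    exact Finset.sum_congr rfl fun k _ => by rw [smul_add, add_comm]
  refine ⟨part1, ?_, ?_⟩
  · intro u hu
    rw [Phi_eq u (eq_of_mem_peirceHalf hu)]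
    exact Submodule.neg_mem _ (Submodule.smul_mem _ _
      (mem_peirceHalf_of (memhalf u (eq_of_mem_peirceHalf hu))))
  -- the homeomorphism
  set F : (H →L[ℂ] H) →L[ℂ] (H →L[ℂ] H) := (-(1/2 : ℂ)) • (lrMul 1 a + lrMul a 1) with hFdef
  have hF : ∀ x : H →L[ℂ] H, F x = -((1/2 : ℂ) • (x * a + a * x)) := by
    intro x
    simp only [hFdef, ContinuousLinearMap.smul_apply, ContinuousLinearMap.add_apply,
      lrMul_apply, one_mul, mul_one, neg_smul]
  set G : (H →L[ℂ] H) →L[ℂ] (H →L[ℂ] H) :=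
    ∑ k, (-(2 : ℂ)/Λ k) • (lrMul (e k) (1 - p) + lrMul (1 - p) (e k)) with hGdef
  have hG : ∀ x : H →L[ℂ] H,
      G x = ∑ k, (-(2 : ℂ)/Λ k) • (e k * x * (1 - p) + (1 - p) * x * e k) := by
    intro x
    simp only [hGdef, ContinuousLinearMap.sum_apply, ContinuousLinearMap.smul_apply,
      ContinuousLinearMap.add_apply, lrMul_apply]
  have hGmem : ∀ x : H →L[ℂ] H, G x ∈ peirceHalf p := by
    intro x
    rw [hG]
    refine Submodule.sum_mem _ fun k _ => Submodule.smul_mem _ _ (Submodule.add_mem _ ?_ ?_)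
    · refine mem_peirceHalf_of ?_
      have e1 : p * (e k * x * (1 - p)) = (p * e k) * x * (1 - p) := by noncomm_ring
      have e2 : (e k * x * (1 - p)) * p = e k * x * ((1 - p) * p) := by noncomm_ring
      have e3 : (1 - p) * p = 0 := by rw [sub_mul, one_mul, hpp, sub_self]
      rw [e1, e2, e3, hpe, mul_zero, add_zero]
    · refine mem_peirceHalf_of ?_
      have e1 : p * ((1 - p) * x * e k) = (p * (1 - p)) * x * e k := by noncomm_ring
      have e2 : ((1 - p) * x * e k) * p = (1 - p) * x * (e k * p) := by noncomm_ring
      have e3 : p * (1 - p) = 0 := by rw [mul_sub, mul_one, hpp, sub_self]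
      rw [e1, e2, e3, hep, zero_mul, zero_mul, zero_add]
  have hFmem : ∀ u : H →L[ℂ] H, p * u + u * p = u → F u ∈ peirceHalf p := by
    intro u hu
    rw [hF]
    exact Submodule.neg_mem _ (Submodule.smul_mem _ _ (mem_peirceHalf_of (memhalf u hu)))
  have hsum : ∀ u : H →L[ℂ] H, p * u + u * p = u →
      ∑ k, (e k * u * (1 - p) + (1 - p) * u * e k) = u := by
    intro u hu
    have h1 : ∑ k, (e k * u * (1 - p) + (1 - p) * u * e k)
        = p * u * (1 - p) + (1 - p) * u * p := by
      rw [Finset.sum_add_distrib, ← Finset.sum_mul, ← Finset.sum_mul, ← Finset.mul_sum, ← hp]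
    rw [h1]
    have h2 : p * u * (1 - p) + (1 - p) * u * p
        = (p * u + u * p) - (p * u * p + p * u * p) := by noncomm_ring
    rw [h2, hu, hpup u hu]
    simp
  have hterm1 : ∀ (k : Fin n) (u : H →L[ℂ] H),
      e k * (u * a + a * u) * (1 - p) + (1 - p) * (u * a + a * u) * e k
        = Λ k • (e k * u * (1 - p) + (1 - p) * u * e k) := by
    intro k u
    have e1 : e k * (u * a + a * u) * (1 - p)
        = e k * u * (a * (1 - p)) + (e k * a) * (u * (1 - p)) := by noncomm_ring
    have e2 : (1 - p) * (u * a + a * u) * e k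
        = ((1 - p) * u) * (a * e k) + ((1 - p) * a) * (u * e k) := by noncomm_ring
    rw [e1, e2, ha1p, h1pa, hea, hae, mul_zero, zero_mul, add_zero, zero_add]
    simp only [mul_add, add_mul, mul_smul_comm, smul_mul_assoc, smul_add, mul_neg,
      neg_mul, neg_add, smul_neg, mul_assoc]
    all_goals abel
  have hterm1' : ∀ (k : Fin n) (u : H →L[ℂ] H),
      e k * (F u) * (1 - p) + (1 - p) * (F u) * e k
        = (-(Λ k)/2) • (e k * u * (1 - p) + (1 - p) * u * e k) := by
    intro k u
    rw [hF]
    have e1 : e k * (-((1/2 : ℂ) • (u * a + a * u))) * (1 - p)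
          + (1 - p) * (-((1/2 : ℂ) • (u * a + a * u))) * e k
        = -((1/2 : ℂ) • (e k * (u * a + a * u) * (1 - p)
          + (1 - p) * (u * a + a * u) * e k)) := by
      simp only [mul_add, add_mul, mul_smul_comm, smul_mul_assoc, smul_add, mul_neg,
        neg_mul, neg_add, smul_neg, mul_assoc]
      all_goals abel
    rw [e1, hterm1 k u, smul_smul, ← neg_smul]
    congr 1
    ring
  have hterm2 : ∀ (k : Fin n) (v : H →L[ℂ] H),
      (e k * v * (1 - p) + (1 - p) * v * e k) * a
        + a * (e k * v * (1 - p) + (1 - p) * v * e k)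
        = Λ k • (e k * v * (1 - p) + (1 - p) * v * e k) := by
    intro k v
    have e1 : (e k * v * (1 - p) + (1 - p) * v * e k) * a
        = e k * v * ((1 - p) * a) + (1 - p) * v * (e k * a) := by noncomm_ring
    have e2 : a * (e k * v * (1 - p) + (1 - p) * v * e k)
        = (a * e k) * (v * (1 - p)) + (a * (1 - p)) * (v * e k) := by noncomm_ring
    rw [e1, e2, h1pa, hea, hae, ha1p, mul_zero, zero_mul, zero_add, add_zero]
    simp only [mul_add, add_mul, mul_smul_comm, smul_mul_assoc, smul_add, mul_neg,
      neg_mul, neg_add, smul_neg, mul_assoc]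
    all_goals abel
  have hGF : ∀ u : H →L[ℂ] H, p * u + u * p = u → G (F u) = u := by
    intro u hu
    rw [hG]
    calc ∑ k, (-(2 : ℂ)/Λ k) • (e k * F u * (1 - p) + (1 - p) * F u * e k)
        = ∑ k, (e k * u * (1 - p) + (1 - p) * u * e k) := by
          refine Finset.sum_congr rfl fun k _ => ?_
          rw [hterm1' k u, smul_smul]
          have hc : (-(2 : ℂ)/Λ k) * (-(Λ k)/2) = 1 := by
            have h0 := hΛ0 k
            field_simp
          rw [hc, one_smul]
      _ = u := hsum u hu
  have hFG : ∀ v : H →L[ℂ] H, p * v + v * p = v → F (G v) = v := by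
    intro v hv
    rw [hF, hG]
    have h1 : (∑ k, (-(2 : ℂ)/Λ k) • (e k * v * (1 - p) + (1 - p) * v * e k)) * a
          + a * (∑ k, (-(2 : ℂ)/Λ k) • (e k * v * (1 - p) + (1 - p) * v * e k))
        = ∑ k, (-(2 : ℂ)/Λ k) • ((e k * v * (1 - p) + (1 - p) * v * e k) * a
          + a * (e k * v * (1 - p) + (1 - p) * v * e k)) := by
      rw [Finset.sum_mul, Finset.mul_sum, ← Finset.sum_add_distrib]
      refine Finset.sum_congr rfl fun k _ => ?_
      simp only [mul_add, add_mul, mul_smul_comm, smul_mul_assoc, smul_add, mul_assoc]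
    rw [h1]
    have h2 : ∀ k ∈ (Finset.univ : Finset (Fin n)),
        (-(2 : ℂ)/Λ k) • ((e k * v * (1 - p) + (1 - p) * v * e k) * a
          + a * (e k * v * (1 - p) + (1 - p) * v * e k))
        = (-(2 : ℂ)) • (e k * v * (1 - p) + (1 - p) * v * e k) := by
      intro k _
      rw [hterm2 k v, smul_smul]
      congr 1
      have h0 := hΛ0 k
      field_simp
    rw [Finset.sum_congr rfl h2, ← Finset.smul_sum, hsum v hv, smul_smul]
    norm_num
  refine ⟨ContinuousLinearEquiv.equivOfInverse
    ((F.comp (peirceHalf p).subtypeL).codRestrict _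
      (fun u => hFmem u (eq_of_mem_peirceHalf u.2)))
    ((G.comp (peirceHalf p).subtypeL).codRestrict _ (fun u => hGmem u)) ?_ ?_, ?_⟩
  · intro u
    apply Subtype.ext
    change G (F (u : H →L[ℂ] H)) = (u : H →L[ℂ] H)
    exact hGF u (eq_of_mem_peirceHalf u.2)
  · intro u
    apply Subtype.ext
    change F (G (u : H →L[ℂ] H)) = (u : H →L[ℂ] H)
    exact hFG u (eq_of_mem_peirceHalf u.2)
  · intro u
    rw [ContinuousLinearEquiv.equivOfInverse_apply]
    change F (u : H →L[ℂ] H) = _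
    rw [Phi_eq (↑u) (eq_of_mem_peirceHalf u.2)]
    exact hF ↑u
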